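/- If T^σ is an oriented forest (the underlying graph T is acyclic) with matching number m(T), then r(T) = sr(T^σ) = 2·m(T), where r(T) is the rank of the adjacency matrix of T. -/

import Mathlib

open scoped Classical

def IsSkewAdjMatrix {V : Type*} (G : SimpleGraph V) (S : Matrix V V ℝ) : Prop :=
  (∀ i j, G.Adj i j → S i j = 1 ∨ S i j = -1) ∧
  (∀ i j, ¬ G.Adj i j → S i j = 0) ∧
  (∀ i j, S j i = - S i j)

noncomputable def adjMat {V : Type*} (G : SimpleGraph V) : Matrix V V ℝ :=
  Matrix.of fun i j => if G.Adj i j then 1 else 0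

noncomputable def cycDim {V : Type*} (G : SimpleGraph V) : ℤ :=
  (G.edgeSet.ncard : ℤ) - Nat.card V + Nat.card G.ConnectedComponent

/-- The matching number of a graph: the largest number of edges of a
matching subgraph. -/
noncomputable def matchingNumber {V : Type*} (G : SimpleGraph V) : ℕ :=
  sSup {k | ∃ M : G.Subgraph, M.IsMatching ∧ M.edgeSet.ncard = k}


private lemma finrank_submodule_prod {R M N : Type*} [DivisionRing R] [AddCommGroup M]
    [AddCommGroup N] [Module R M] [Module R N] [FiniteDimensional R M] [FiniteDimensional R N]
    (p : Submodule R M) (q : Submodule R N) :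
    Module.finrank R (p.prod q) = Module.finrank R p + Module.finrank R q := by
  let e : (p.prod q : Submodule R (M × N)) ≃ₗ[R] p × q :=
    { toFun := fun x => (⟨x.1.1, x.2.1⟩, ⟨x.1.2, x.2.2⟩)
      invFun := fun y => ⟨(y.1.1, y.2.1), ⟨y.1.2, y.2.2⟩⟩
      map_add' := fun a b => rfl
      map_smul' := fun c a => rfl
      left_inv := fun a => rfl
      right_inv := fun a => rfl }
  rw [e.finrank_eq, Module.finrank_prod]

private lemma rank_fromBlocks_zero {m n : Type*} [Fintype m] [Fintype n] [DecidableEq m]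
    [DecidableEq n] (A : Matrix m m ℝ) (D : Matrix n n ℝ) :
    (Matrix.fromBlocks A 0 0 D).rank = A.rank + D.rank := by
  classical
  set E := LinearEquiv.sumArrowLequivProdArrow m n ℝ ℝ with hE
  have hrange : LinearMap.range (Matrix.fromBlocks A 0 0 D).mulVecLin
      = ((LinearMap.range A.mulVecLin).prod (LinearMap.range D.mulVecLin)).map
        (E.symm : ((m → ℝ) × (n → ℝ)) →ₗ[ℝ] (m ⊕ n → ℝ)) := by
    ext z
    rw [Submodule.mem_map_equiv]
    simp only [LinearEquiv.symm_symm, Submodule.mem_prod, LinearMap.mem_range,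
      Matrix.mulVecLin_apply]
    constructor
    · rintro ⟨w, rfl⟩
      rw [Matrix.fromBlocks_mulVec]
      constructor
      · exact ⟨w ∘ Sum.inl, by ext a; simp [hE, Matrix.zero_mulVec]⟩
      · exact ⟨w ∘ Sum.inr, by ext a; simp [hE, Matrix.zero_mulVec]⟩
    · rintro ⟨⟨a, ha⟩, ⟨d, hd⟩⟩
      refine ⟨Sum.elim a d, ?_⟩
      rw [Matrix.fromBlocks_mulVec]
      ext i
      cases i with
      | inl i =>
          have := congrFun ha i
          simpa [hE, Matrix.zero_mulVec] using this
      | inr i =>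
          have := congrFun hd i
          simpa [hE, Matrix.zero_mulVec] using this
  rw [Matrix.rank, hrange, LinearEquiv.finrank_map_eq E.symm, finrank_submodule_prod]
  rfl


noncomputable def punchMat {V : Type*} (M : Matrix V V ℝ) (u v : V) : Matrix V V ℝ :=
  Matrix.of fun x y => if x = u ∨ x = v ∨ y = u ∨ y = v then (0 : ℝ) else M x y

private lemma rank_punchMat {V : Type*} [Fintype V] (M : Matrix V V ℝ) {u v : V} (hne : u ≠ v)
    (hdet : M u v * M v u ≠ 0) (huu : M u u = 0) (hvv : M v v = 0)
    (hrow : ∀ w, w ≠ u → M v w = 0) (hcol : ∀ w, w ≠ u → M w v = 0) :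
    M.rank = (punchMat M u v).rank + 2 := by
  classical
  set W := {x : V // x ≠ u ∧ x ≠ v} with hW
  haveI : Fintype W := Fintype.ofFinite _
  let e : (Fin 2 ⊕ W) ≃ V :=
    { toFun := Sum.elim (fun i => if i = 0 then u else v) Subtype.val
      invFun := fun x => if h1 : x = u then Sum.inl 0 else if h2 : x = v then Sum.inl 1
        else Sum.inr ⟨x, h1, h2⟩
      left_inv := by
        rintro (i | w)
        · fin_cases i <;> simp [hne, hne.symm]
        · simp [w.2.1, w.2.2]
      right_inv := by
        intro x
        by_cases h1 : x = u
        · subst h1; simp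
        · by_cases h2 : x = v
          · subst h2; simp [h1]
          · simp [h1, h2] }
  have heu : e (Sum.inl 0) = u := by simp [e]
  have hev : e (Sum.inl 1) = v := by simp [e]
  have hew : ∀ w : W, e (Sum.inr w) = w.1 := fun w => rfl
  let A : Matrix (Fin 2) (Fin 2) ℝ := !![0, M u v; M v u, 0]
  let B : Matrix (Fin 2) W ℝ := Matrix.of fun i w => if i = 0 then M u w.1 else 0
  let C : Matrix W (Fin 2) ℝ := Matrix.of fun w j => if j = 0 then M w.1 u else 0
  let D : Matrix W W ℝ := Matrix.of fun w x => M w.1 x.1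
  have hM2 : M.submatrix e e = Matrix.fromBlocks A B C D := by
    ext i j
    rcases i with i | w <;> rcases j with j | x
    · fin_cases i <;> fin_cases j <;>
        simp [heu, hev, A, huu, hvv, Matrix.fromBlocks]
    · fin_cases i <;> simp [heu, hev, hew, B, Matrix.fromBlocks, hrow x.1 x.2.1]
    · fin_cases j <;> simp [heu, hev, hew, C, Matrix.fromBlocks, hcol w.1 w.2.1]
    · simp [hew, D, Matrix.fromBlocks]
  have hdetA : A.det ≠ 0 := by
    have e00 : A 0 0 = 0 := by simp [A]
    have e01 : A 0 1 = M u v := by simp [A]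
    have e10 : A 1 0 = M v u := by simp [A]
    have e11 : A 1 1 = 0 := by simp [A]
    rw [Matrix.det_fin_two, e00, e01, e10, e11]
    intro h
    exact hdet (by linarith)
  haveI : Invertible A := A.invertibleOfIsUnitDet (isUnit_iff_ne_zero.mpr hdetA)
  have hA11 : A 1 1 = 0 := by simp [A]
  have hAinv00 : A⁻¹ 0 0 = 0 := by
    rw [Matrix.inv_def, Matrix.adjugate_fin_two]
    simp [hA11]
  have hCAB : C * ⅟A * B = 0 := by
    rw [Matrix.mul_assoc, Matrix.invOf_eq_nonsing_inv]
    ext w x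
    have hB1 : B 1 x = 0 := by simp [B]
    have hC1 : C w 1 = 0 := by simp [C]
    simp [Matrix.mul_apply, Fin.sum_univ_two, hAinv00, hB1, hC1]
  have hN : (punchMat M u v).submatrix e e = Matrix.fromBlocks 0 0 0 D := by
    ext i j
    rcases i with i | w <;> rcases j with j | x
    · fin_cases i <;> fin_cases j <;> simp [heu, hev, punchMat, Matrix.fromBlocks]
    · fin_cases i <;> simp [heu, hev, hew, punchMat, Matrix.fromBlocks]
    · fin_cases j <;> simp [heu, hev, hew, punchMat, Matrix.fromBlocks]
    · simp [hew, punchMat, Matrix.fromBlocks, D, w.2.1, w.2.2, x.2.1, x.2.2]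
  have hrankM : M.rank = A.rank + D.rank := by
    rw [← Matrix.rank_submatrix M e e, hM2,
      Matrix.fromBlocks_eq_of_invertible₁₁ A B C D, hCAB, sub_zero]
    haveI : Invertible (1 : Matrix (Fin 2) (Fin 2) ℝ) := invertibleOne
    haveI : Invertible (1 : Matrix W W ℝ) := invertibleOne
    haveI iL : Invertible (Matrix.fromBlocks (1 : Matrix (Fin 2) (Fin 2) ℝ) 0 (C * ⅟A)
        (1 : Matrix W W ℝ)) := Matrix.fromBlocksZero₁₂Invertible _ _ _
    haveI iU : Invertible (Matrix.fromBlocks (1 : Matrix (Fin 2) (Fin 2) ℝ) (⅟A * B) 0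
        (1 : Matrix W W ℝ)) := Matrix.fromBlocksZero₂₁Invertible _ _ _
    rw [Matrix.rank_mul_eq_left_of_isUnit_det _ _ (Matrix.isUnit_det_of_invertible _),
      Matrix.rank_mul_eq_right_of_isUnit_det _ _ (Matrix.isUnit_det_of_invertible _),
      rank_fromBlocks_zero]
  have hrankN : (punchMat M u v).rank = D.rank := by
    rw [← Matrix.rank_submatrix (punchMat M u v) e e, hN, rank_fromBlocks_zero,
      Matrix.rank_zero, zero_add]
  have hrankA : A.rank = 2 := by
    rw [Matrix.rank_of_isUnit A ((Matrix.isUnit_iff_isUnit_det A).mpr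
      (isUnit_iff_ne_zero.mpr hdetA))]
    simp
  rw [hrankM, hrankN, hrankA, add_comm]


private lemma walk_cons_concat {V : Type*} {G : SimpleGraph V} :
    ∀ {b c : V} (q : G.Walk b c) {a : V} (h : G.Adj a b),
      ∃ (d : V) (r : G.Walk a d) (h' : G.Adj d c), SimpleGraph.Walk.cons h q = r.concat h' := by
  intro b c q
  induction q with
  | nil =>
      intro a h
      exact ⟨a, SimpleGraph.Walk.nil, h, (SimpleGraph.Walk.concat_nil h).symm⟩
  | cons h₂ q₂ ih =>
      intro a h
      obtain ⟨d, r, h', heq⟩ := ih h₂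
      exact ⟨d, SimpleGraph.Walk.cons h r, h', by
        rw [SimpleGraph.Walk.concat_cons, ← heq]⟩

private lemma exists_leaf {V : Type*} [Fintype V] (T : SimpleGraph V) (hT : T.IsAcyclic)
    {x y : V} (hxy : T.Adj x y) : ∃ u v, T.Adj u v ∧ ∀ w, T.Adj v w → w = u := by
  classical
  set L := {n | ∃ (a : V) (b : V) (p : T.Walk a b), p.IsPath ∧ p.length = n} with hLdef
  have h1 : 1 ∈ L := ⟨x, y, SimpleGraph.Walk.cons hxy SimpleGraph.Walk.nil,
    by simp [hxy.ne], by simp⟩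
  have hbdd : BddAbove L := by
    refine ⟨Fintype.card V, ?_⟩
    rintro k ⟨a, b, p, hp, rfl⟩
    exact hp.length_lt.le
  obtain ⟨a, b, p, hp, hlen⟩ := Nat.sSup_mem ⟨1, h1⟩ hbdd
  have h1le : 1 ≤ sSup L := le_csSup hbdd h1
  cases p with
  | nil => simp at hlen; omega
  | cons h₀ p₀ =>
    obtain ⟨c, q, hcb, heq⟩ := walk_cons_concat p₀ h₀
    set P := SimpleGraph.Walk.cons h₀ p₀ with hPdef
    refine ⟨c, b, hcb, ?_⟩
    intro w hbw
    by_cases hws : w ∈ P.support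
    · have hd := hp.dropUntil hws
      have hone : (SimpleGraph.Walk.cons hbw.symm SimpleGraph.Walk.nil : T.Walk w b).IsPath := by
        simp [hbw.ne']
      have hpu := hT.path_unique ⟨P.dropUntil w hws, hd⟩
        ⟨SimpleGraph.Walk.cons hbw.symm SimpleGraph.Walk.nil, hone⟩
      have hdw : P.dropUntil w hws = SimpleGraph.Walk.cons hbw.symm SimpleGraph.Walk.nil :=
        congrArg Subtype.val hpu
      have hspec := P.take_spec hws
      rw [hdw] at hspec
      have hPc : (P.takeUntil w hws).concat hbw.symm = q.concat hcb := by
        rw [SimpleGraph.Walk.concat_eq_append, hspec]; exact heq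
      obtain ⟨hv, -⟩ := SimpleGraph.Walk.concat_inj hPc
      exact hv
    · exfalso
      have hp' : (P.concat hbw).IsPath := by
        rw [← SimpleGraph.Walk.isPath_reverse_iff, SimpleGraph.Walk.reverse_concat]
        exact hp.reverse.cons (by simpa using hws)
      have hmem : sSup L + 1 ∈ L :=
        ⟨a, w, P.concat hbw, hp', by rw [SimpleGraph.Walk.length_concat, hlen]⟩
      have := le_csSup hbdd hmem
      omega



def punchGraph {V : Type*} (T : SimpleGraph V) (u v : V) : SimpleGraph V where
  Adj x y := T.Adj x y ∧ x ≠ u ∧ x ≠ v ∧ y ≠ u ∧ y ≠ v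
  symm := ⟨fun x y ⟨h, h1, h2, h3, h4⟩ => ⟨h.symm, h3, h4, h1, h2⟩⟩
  loopless := ⟨fun x h => T.irrefl h.1⟩

private lemma matching_bddAbove {V : Type*} [Fintype V] (G : SimpleGraph V) :
    BddAbove {k | ∃ M : G.Subgraph, M.IsMatching ∧ M.edgeSet.ncard = k} := by
  refine ⟨G.edgeSet.ncard, ?_⟩
  rintro k ⟨M, hM, rfl⟩
  exact Set.ncard_le_ncard M.edgeSet_subset G.edgeSet.toFinite

private lemma matching_zero_mem {V : Type*} (G : SimpleGraph V) :
    0 ∈ {k | ∃ M : G.Subgraph, M.IsMatching ∧ M.edgeSet.ncard = k} := by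
  refine ⟨⊥, ?_, by simp [SimpleGraph.Subgraph.edgeSet_bot]⟩
  intro v hv
  simp [SimpleGraph.Subgraph.verts_bot] at hv

private lemma exists_max_matching {V : Type*} [Fintype V] (G : SimpleGraph V) :
    ∃ M : G.Subgraph, M.IsMatching ∧ M.edgeSet.ncard = matchingNumber G :=
  Nat.sSup_mem ⟨0, matching_zero_mem G⟩ (matching_bddAbove G)

private lemma le_matchingNumber {V : Type*} [Fintype V] {G : SimpleGraph V} {M : G.Subgraph}
    (hM : M.IsMatching) : M.edgeSet.ncard ≤ matchingNumber G :=
  le_csSup (matching_bddAbove G) ⟨M, hM, rfl⟩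

private lemma matchingNumber_eq_zero {V : Type*} [Fintype V] {G : SimpleGraph V}
    (hE : ∀ x y, ¬ G.Adj x y) : matchingNumber G = 0 := by
  refine Nat.le_zero.mp (csSup_le ⟨0, matching_zero_mem G⟩ ?_)
  rintro k ⟨M, hM, rfl⟩
  have : M.edgeSet = ∅ := by
    ext e
    induction e with
    | _ x y =>
      simp only [SimpleGraph.Subgraph.mem_edgeSet, Set.mem_empty_iff_false, iff_false]
      exact fun h => hE x y (M.adj_sub h)
  simp [this]

private lemma matchingNumber_punch {V : Type*} [Fintype V] (T : SimpleGraph V) {u v : V}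
    (huv : T.Adj u v) (hleaf : ∀ w, T.Adj v w → w = u) :
    matchingNumber T = matchingNumber (punchGraph T u v) + 1 := by
  classical
  refine le_antisymm ?_ ?_
  · -- ≤ : from a max matching of T, build a matching of the punched graph
    obtain ⟨M, hM, hcard⟩ := exists_max_matching T
    set M'' : (punchGraph T u v).Subgraph :=
      { verts := {x | ∃ y, M.Adj x y ∧ x ≠ u ∧ x ≠ v ∧ y ≠ u ∧ y ≠ v}
        Adj := fun x y => M.Adj x y ∧ x ≠ u ∧ x ≠ v ∧ y ≠ u ∧ y ≠ v
        adj_sub := fun h => ⟨M.adj_sub h.1, h.2⟩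
        edge_vert := fun h => ⟨_, h⟩
        symm := ⟨fun x y ⟨h, a, b, c, d⟩ => ⟨M.adj_symm h, c, d, a, b⟩⟩ } with hM''def
    have hM''adj : ∀ x y, M''.Adj x y ↔ (M.Adj x y ∧ x ≠ u ∧ x ≠ v ∧ y ≠ u ∧ y ≠ v) :=
      fun _ _ => Iff.rfl
    have hM''match : M''.IsMatching := by
      rintro x ⟨y, hy⟩
      refine ⟨y, hy, ?_⟩
      intro z hz
      obtain ⟨w, -, hwu⟩ := hM (M.edge_vert hy.1)
      rw [hwu z hz.1, hwu y hy.1]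
    have hmain : M.edgeSet.ncard ≤ M''.edgeSet.ncard + 1 := by
      by_cases hu : u ∈ M.verts
      · obtain ⟨w0, hw0, hw0u⟩ := hM hu
        have hsub : M.edgeSet ⊆ insert s(u, w0) M''.edgeSet := by
          rintro e he
          induction e with
          | _ p q =>
            rw [SimpleGraph.Subgraph.mem_edgeSet] at he
            by_cases hpu : p = u
            · subst hpu
              rw [hw0u q he]
              exact Set.mem_insert _ _
            by_cases hqu : q = u
            · subst hqu
              rw [Sym2.eq_swap]
              rw [hw0u p (M.adj_symm he)]
              exact Set.mem_insert _ _
            by_cases hpv : p = v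
            · subst hpv
              exact absurd (hleaf q (M.adj_sub he)) hqu
            by_cases hqv : q = v
            · subst hqv
              exact absurd (hleaf p (M.adj_sub (M.adj_symm he))) hpu
            · exact Set.mem_insert_of_mem _
                ((SimpleGraph.Subgraph.mem_edgeSet).mpr ⟨he, hpu, hpv, hqu, hqv⟩)
        calc M.edgeSet.ncard ≤ (insert s(u, w0) M''.edgeSet).ncard :=
              Set.ncard_le_ncard hsub ((M''.edgeSet).toFinite.insert _)
          _ ≤ M''.edgeSet.ncard + 1 := Set.ncard_insert_le _ _
      · have hsub : M.edgeSet ⊆ M''.edgeSet := by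
          rintro e he
          induction e with
          | _ p q =>
            rw [SimpleGraph.Subgraph.mem_edgeSet] at he
            have hpu : p ≠ u := fun h => hu (h ▸ M.edge_vert he)
            have hqu : q ≠ u := fun h => hu (h ▸ M.edge_vert (M.adj_symm he))
            have hpv : p ≠ v := fun h => hqu (hleaf q (M.adj_sub (h ▸ he)))
            have hqv : q ≠ v := fun h => hpu (hleaf p (M.adj_sub (M.adj_symm (h ▸ he))))
            exact (SimpleGraph.Subgraph.mem_edgeSet).mpr ⟨he, hpu, hpv, hqu, hqv⟩
        have := Set.ncard_le_ncard hsub (M''.edgeSet).toFinite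
        omega
    calc matchingNumber T = M.edgeSet.ncard := hcard.symm
      _ ≤ M''.edgeSet.ncard + 1 := hmain
      _ ≤ matchingNumber (punchGraph T u v) + 1 := by
          have := le_matchingNumber hM''match
          omega
  · -- ≥ : from a max matching of the punched graph, add the edge uv
    obtain ⟨M', hM', hcard'⟩ := exists_max_matching (punchGraph T u v)
    have hM'pun : ∀ {x y}, M'.Adj x y → x ≠ u ∧ x ≠ v ∧ y ≠ u ∧ y ≠ v :=
      fun h => (M'.adj_sub h).2
    set M : T.Subgraph :=
      { verts := M'.verts ∪ {u, v}
        Adj := fun x y => M'.Adj x y ∨ (x = u ∧ y = v) ∨ (x = v ∧ y = u)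
        adj_sub := by
          rintro x y (h | ⟨rfl, rfl⟩ | ⟨rfl, rfl⟩)
          · exact (M'.adj_sub h).1
          · exact huv
          · exact huv.symm
        edge_vert := by
          rintro x y (h | ⟨rfl, -⟩ | ⟨rfl, -⟩)
          · exact Or.inl (M'.edge_vert h)
          · exact Or.inr (by simp)
          · exact Or.inr (by simp)
        symm := by
          constructor
          rintro x y (h | ⟨rfl, rfl⟩ | ⟨rfl, rfl⟩)
          · exact Or.inl (M'.adj_symm h)
          · exact Or.inr (Or.inr ⟨rfl, rfl⟩)
          · exact Or.inr (Or.inl ⟨rfl, rfl⟩) } with hMdef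
    have hMadj : ∀ x y, M.Adj x y ↔ (M'.Adj x y ∨ (x = u ∧ y = v) ∨ (x = v ∧ y = u)) :=
      fun _ _ => Iff.rfl
    have hMvertsne : ∀ x ∈ M'.verts, x ≠ u ∧ x ≠ v := by
      intro x hx
      obtain ⟨y, hy, -⟩ := hM' hx
      exact ⟨(hM'pun hy).1, (hM'pun hy).2.1⟩
    have hMmatch : M.IsMatching := by
      intro x hx
      rcases hx with hx | hx
      · obtain ⟨hxu, hxv⟩ := hMvertsne x hx
        obtain ⟨y, hy, hyu⟩ := hM' hx
        refine ⟨y, Or.inl hy, ?_⟩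
        rintro z (hz | ⟨rfl, rfl⟩ | ⟨rfl, rfl⟩)
        · exact hyu z hz
        · exact absurd rfl hxu
        · exact absurd rfl hxv
      · rcases hx with rfl | hx
        · refine ⟨v, Or.inr (Or.inl ⟨rfl, rfl⟩), ?_⟩
          rintro z (hz | ⟨-, rfl⟩ | ⟨h, rfl⟩)
          · exact absurd rfl (hM'pun hz).1
          · rfl
          · exact absurd h huv.ne
        · rcases hx with rfl
          refine ⟨u, Or.inr (Or.inr ⟨rfl, rfl⟩), ?_⟩
          rintro z (hz | ⟨h, rfl⟩ | ⟨-, rfl⟩)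
          · exact absurd rfl (hM'pun hz).2.1
          · exact absurd h huv.ne'
          · rfl
    have hMedge : M.edgeSet = insert s(u, v) M'.edgeSet := by
      ext e
      induction e with
      | _ p q =>
        simp only [SimpleGraph.Subgraph.mem_edgeSet, Set.mem_insert_iff, Sym2.eq_iff, hMadj]
        tauto
    have hnotmem : s(u, v) ∉ M'.edgeSet := by
      rw [SimpleGraph.Subgraph.mem_edgeSet]
      exact fun h => (hM'pun h).1 rfl
    have hMcard : M.edgeSet.ncard = M'.edgeSet.ncard + 1 := by
      rw [hMedge, Set.ncard_insert_of_notMem hnotmem (M'.edgeSet).toFinite]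
    calc matchingNumber (punchGraph T u v) + 1 = M.edgeSet.ncard := by rw [hMcard, hcard']
      _ ≤ matchingNumber T := le_matchingNumber hMmatch


/-- For an oriented forest, r(T) = sr(T^σ) = 2 m(T). -/
theorem forest_rank_eq_skewRank_eq_two_mul_matchingNumber {V : Type*} [Fintype V]
    (T : SimpleGraph V) (hT : T.IsAcyclic)
    (S : Matrix V V ℝ) (hS : IsSkewAdjMatrix T S) :
    (adjMat T).rank = S.rank ∧ S.rank = 2 * matchingNumber T := by
  classical
  have key : ∀ (n : ℕ) (T : SimpleGraph V), T.edgeSet.ncard = n → T.IsAcyclic →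
      ∀ S : Matrix V V ℝ, IsSkewAdjMatrix T S →
      (adjMat T).rank = 2 * matchingNumber T ∧ S.rank = 2 * matchingNumber T := by
    intro n
    induction n using Nat.strong_induction_on with
    | _ n ih =>
      intro T hn hac S hS
      by_cases hE : ∀ x y, ¬ T.Adj x y
      · -- base case: no edges
        have hadj0 : adjMat T = 0 := by
          ext i j
          simp [adjMat, hE i j]
        have hS0 : S = 0 := by
          ext i j
          simpa using hS.2.1 i j (hE i j)
        rw [hadj0, hS0, matchingNumber_eq_zero hE, Matrix.rank_zero]
        simp
      · push_neg at hE
        obtain ⟨x, y, hxy⟩ := hE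
        obtain ⟨u, v, huv, hleaf⟩ := exists_leaf T hac hxy
        set T' := punchGraph T u v with hT'def
        have hle : T' ≤ T := fun x y h => h.1
        have hac' : T'.IsAcyclic := fun w c hc => hac (c.mapLe hle) (hc.mapLe hle)
        -- strictly fewer edges
        have hlt : T'.edgeSet.ncard < n := by
          rw [← hn]
          apply Set.ncard_lt_ncard _ T.edgeSet.toFinite
          constructor
          · exact SimpleGraph.edgeSet_mono hle
          · intro hsub
            have : s(u, v) ∈ T'.edgeSet := hsub (T.mem_edgeSet.mpr huv)
            rw [SimpleGraph.mem_edgeSet] at this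
            exact this.2.1 rfl
        -- matrix facts
        have hAadj : punchMat (adjMat T) u v = adjMat T' := by
          ext i j
          by_cases hcond : i = u ∨ i = v ∨ j = u ∨ j = v
          · have : ¬ T'.Adj i j := by
              rintro ⟨-, h1, h2, h3, h4⟩
              rcases hcond with h | h | h | h
              exacts [h1 h, h2 h, h3 h, h4 h]
            simp [punchMat, adjMat, hcond, this]
          · push_neg at hcond
            have : T'.Adj i j ↔ T.Adj i j := by
              constructor
              · exact fun h => h.1
              · exact fun h => ⟨h, hcond.1, hcond.2.1, hcond.2.2.1, hcond.2.2.2⟩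
            simp [punchMat, adjMat, hcond.1, hcond.2.1, hcond.2.2.1, hcond.2.2.2, this]
        have hSskew : IsSkewAdjMatrix T' (punchMat S u v) := by
          refine ⟨?_, ?_, ?_⟩
          · rintro i j ⟨h, h1, h2, h3, h4⟩
            have : punchMat S u v i j = S i j := by simp [punchMat, h1, h2, h3, h4]
            rw [this]
            exact hS.1 i j h
          · intro i j h
            by_cases hcond : i = u ∨ i = v ∨ j = u ∨ j = v
            · simp [punchMat, hcond]
            · push_neg at hcond
              have : ¬ T.Adj i j := fun hadj => h ⟨hadj, hcond.1, hcond.2.1,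
                hcond.2.2.1, hcond.2.2.2⟩
              simp [punchMat, hcond.1, hcond.2.1, hcond.2.2.1, hcond.2.2.2, hS.2.1 i j this]
          · intro i j
            by_cases hcond : i = u ∨ i = v ∨ j = u ∨ j = v
            · have hcond' : j = u ∨ j = v ∨ i = u ∨ i = v := by tauto
              simp [punchMat, hcond, hcond']
            · push_neg at hcond
              simp only [punchMat, Matrix.of_apply, if_neg, hcond.1, hcond.2.1,
                hcond.2.2.1, hcond.2.2.2]
              rw [if_neg (by tauto), if_neg (by tauto)]
              exact hS.2.2 i j
        -- hypotheses of rank_punchMat for adjMat T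
        have hA1 : adjMat T u v = 1 := by simp [adjMat, huv]
        have hA2 : adjMat T v u = 1 := by simp [adjMat, huv.symm]
        have hrkA : (adjMat T).rank = (adjMat T').rank + 2 := by
          rw [← hAadj]
          apply rank_punchMat (adjMat T) huv.ne
          · rw [hA1, hA2]; norm_num
          · simp [adjMat]
          · simp [adjMat]
          · intro w hw
            have : ¬ T.Adj v w := fun h => hw (hleaf w h)
            simp [adjMat, this]
          · intro w hw
            have : ¬ T.Adj w v := fun h => hw (hleaf w h.symm)
            simp [adjMat, this]
        have hSuv : S u v = 1 ∨ S u v = -1 := hS.1 u v huv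
        have hrkS : S.rank = (punchMat S u v).rank + 2 := by
          apply rank_punchMat S huv.ne
          · have hvu : S v u = - S u v := hS.2.2 u v
            rw [hvu]
            rcases hSuv with h | h <;> rw [h] <;> norm_num
          · have := hS.2.2 u u; linarith
          · have := hS.2.2 v v; linarith
          · intro w hw
            have : ¬ T.Adj v w := fun h => hw (hleaf w h)
            exact hS.2.1 v w this
          · intro w hw
            have : ¬ T.Adj w v := fun h => hw (hleaf w h.symm)
            exact hS.2.1 w v this
        obtain ⟨ih1, ih2⟩ := ih _ hlt T' rfl hac' (punchMat S u v) hSskew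
        have hmn : matchingNumber T = matchingNumber T' + 1 :=
          matchingNumber_punch T huv hleaf
        constructor
        · rw [hrkA, ih1, hmn]; ring
        · rw [hrkS, ih2, hmn]; ring
  obtain ⟨h1, h2⟩ := key _ T rfl hT S hS
  exact ⟨h1.trans h2.symm, h2⟩
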